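/- arXiv:1712.09035 — 3 statements merged into one kernel-verified Lean document; each statement's English description precedes it below -/
import Mathlib

section
/- Let M be a finitely-valued random variable and Y_1,…,Y_ℓ random variables with values in a common finite set 𝒳, and let 𝔄⁰ be a collection of ζ-element subsets of {1,…,ℓ}. Assume that for every s = {s_1,…,s_ζ} ∈ 𝔄⁰ and every tuple (z_1,…,z_ζ) ∈ 𝒳^ζ occurring with positive probability, the entropy of M under the conditional probability measure given the event {Y_{s_1}=z_1,…,Y_{s_ζ}=z_ζ} equals H(M | (Y_{s_1},…,Y_{s_ζ})). Then for every general adaptive attack α compatible with 𝔄⁰, with observation vector Z, I(M ; Z) ≤ max_{s ∈ 𝔄⁰} I(M ; (Y_{s_1},…,Y_{s_ζ})). -/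
open Finset

/-- Probability that the finitely-valued random variable `X` takes value `x`,
with respect to the probability mass function `p` on the finite sample space `Ω`. -/
noncomputable def pmfProb {Ω : Type*} [Fintype Ω] {α : Type*} [Fintype α] [DecidableEq α]
    (p : Ω → ℝ) (X : Ω → α) (x : α) : ℝ :=
  ∑ ω, if X ω = x then p ω else 0

/-- Shannon entropy (natural logarithm) of the random variable `X`. -/
noncomputable def entH {Ω : Type*} [Fintype Ω] {α : Type*} [Fintype α] [DecidableEq α]
    (p : Ω → ℝ) (X : Ω → α) : ℝ :=
  ∑ x, Real.negMulLog (pmfProb p X x)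

/-- Conditional Shannon entropy `H(X|Y) = H(X,Y) - H(Y)`. -/
noncomputable def condH {Ω : Type*} [Fintype Ω] {α β : Type*} [Fintype α] [DecidableEq α]
    [Fintype β] [DecidableEq β] (p : Ω → ℝ) (X : Ω → α) (Y : Ω → β) : ℝ :=
  entH p (fun ω => (X ω, Y ω)) - entH p Y

/-- Mutual information `I(X;Y) = H(X) + H(Y) - H(X,Y)`. -/
noncomputable def mutInfo {Ω : Type*} [Fintype Ω] {α β : Type*} [Fintype α] [DecidableEq α]
    [Fintype β] [DecidableEq β] (p : Ω → ℝ) (X : Ω → α) (Y : Ω → β) : ℝ :=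
  entH p X + entH p Y - entH p (fun ω => (X ω, Y ω))

/-- The conditional probability mass function given an event `E`. -/
noncomputable def condPMF {Ω : Type*} [Fintype Ω] (p : Ω → ℝ) (E : Ω → Prop)
    [DecidablePred E] : Ω → ℝ :=
  fun ω => if E ω then p ω / (∑ ω' ∈ Finset.univ.filter E, p ω') else 0


section Aux

variable {Ω μ β : Type*} [Fintype Ω] [Fintype μ] [DecidableEq μ] [Fintype β] [DecidableEq β]

lemma pmfProb_nonneg (p : Ω → ℝ) (hp : ∀ ω, 0 ≤ p ω) (X : Ω → β) (x : β) :
    0 ≤ pmfProb p X x := by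
  apply Finset.sum_nonneg; intro ω _; split <;> simp [hp ω]

lemma pmfProb_eq_sum_filter (p : Ω → ℝ) (X : Ω → β) (x : β) :
    pmfProb p X x = ∑ ω ∈ Finset.univ.filter (fun ω => X ω = x), p ω := by
  rw [pmfProb, Finset.sum_filter]

lemma sum_pmfProb (p : Ω → ℝ) (X : Ω → β) : ∑ x, pmfProb p X x = ∑ ω, p ω := by
  unfold pmfProb
  rw [Finset.sum_comm]
  simp

lemma sum_pmfProb_pair (p : Ω → ℝ) (M : Ω → μ) (Z : Ω → β) (z : β) :
    ∑ m, pmfProb p (fun ω => (M ω, Z ω)) (m, z) = pmfProb p Z z := by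
  unfold pmfProb
  rw [Finset.sum_comm]
  apply Finset.sum_congr rfl; intro ω _
  by_cases h : Z ω = z <;> simp [h, Prod.ext_iff]

lemma pmfProb_condPMF (p : Ω → ℝ) (M : Ω → μ) (Z : Ω → β) (z : β) (m : μ) :
    pmfProb (condPMF p (fun ω => Z ω = z)) M m
      = pmfProb p (fun ω => (M ω, Z ω)) (m, z) / pmfProb p Z z := by
  rw [pmfProb_eq_sum_filter p Z z]
  unfold pmfProb condPMF
  rw [Finset.sum_div]
  apply Finset.sum_congr rfl; intro ω _
  rw [Finset.sum_filter]
  by_cases h1 : M ω = m <;> by_cases h2 : Z ω = z <;> simp [h1, h2, Prod.ext_iff]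

lemma negMulLog_div_identity {q P : ℝ} (hq : 0 < q) :
    q * Real.negMulLog (P / q) = Real.negMulLog P + P * Real.log q := by
  rcases eq_or_ne P 0 with h | h
  · simp [h, Real.negMulLog]
  · unfold Real.negMulLog
    rw [Real.log_div h hq.ne']
    field_simp
    ring

lemma sum_negMulLog_div {ι : Type*} [Fintype ι] (q : ℝ) (P : ι → ℝ) (hP : ∀ i, 0 ≤ P i)
    (hsum : ∑ i, P i = q) :
    q * ∑ i, Real.negMulLog (P i / q) = ∑ i, Real.negMulLog (P i) - Real.negMulLog q := by
  rcases eq_or_lt_of_le (hsum ▸ Finset.sum_nonneg (fun i _ => hP i)) with h0 | h0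
  · have hPz : ∀ i, P i = 0 := by
      intro i
      have := (Finset.sum_eq_zero_iff_of_nonneg (fun i _ => hP i)).mp (hsum.trans h0.symm)
      exact this i (Finset.mem_univ i)
    simp [← h0, hPz, Real.negMulLog]
  · rw [Finset.mul_sum]
    have : ∀ i ∈ (Finset.univ : Finset ι),
        q * Real.negMulLog (P i / q) = Real.negMulLog (P i) + P i * Real.log q :=
      fun i _ => negMulLog_div_identity h0
    rw [Finset.sum_congr rfl this, Finset.sum_add_distrib, ← Finset.sum_mul, hsum,
      Real.negMulLog]
    ring

lemma condH_eq_sum (p : Ω → ℝ) (hp : ∀ ω, 0 ≤ p ω) (M : Ω → μ) (Z : Ω → β) :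
    condH p M Z = ∑ z, pmfProb p Z z * entH (condPMF p (fun ω => Z ω = z)) M := by
  have step : ∀ z : β, pmfProb p Z z * entH (condPMF p (fun ω => Z ω = z)) M
      = ∑ m, Real.negMulLog (pmfProb p (fun ω => (M ω, Z ω)) (m, z))
        - Real.negMulLog (pmfProb p Z z) := by
    intro z
    rw [entH]
    have : ∀ m, pmfProb (condPMF p (fun ω => Z ω = z)) M m
        = pmfProb p (fun ω => (M ω, Z ω)) (m, z) / pmfProb p Z z :=
      fun m => pmfProb_condPMF p M Z z m
    simp_rw [this]
    exact sum_negMulLog_div _ _ (fun m => pmfProb_nonneg p hp _ _) (sum_pmfProb_pair p M Z z)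
  rw [Finset.sum_congr rfl (fun z _ => step z), Finset.sum_sub_distrib]
  rw [condH, entH, entH]
  congr 1
  rw [Fintype.sum_prod_type, Finset.sum_comm]

lemma mutInfo_eq (p : Ω → ℝ) (M : Ω → μ) (Z : Ω → β) :
    mutInfo p M Z = entH p M - condH p M Z := by
  unfold mutInfo condH; ring

end Aux

lemma condPMF_congr {Ω : Type*} [Fintype Ω] (p : Ω → ℝ) (E E' : Ω → Prop)
    [DecidablePred E] [DecidablePred E'] (h : ∀ ω, E ω ↔ E' ω) :
    condPMF p E = condPMF p E' := by
  have hf : Finset.univ.filter E = Finset.univ.filter E' :=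
    Finset.filter_congr (fun ω _ => h ω)
  funext ω
  simp only [condPMF, hf, h ω]


/-- paper's Theorem 1 / `T7B`: assume that for every `s ∈ 𝔄` and every
value tuple `z` of positive probability, the entropy of `M` under the conditional
distribution given the event `{Y_s = z}` equals `H(M | Y_s)`. Then for every general
adaptive attack `α` compatible with `𝔄`, with observation vector `Z`,
`I(M ; Z) ≤ max_{s ∈ 𝔄} I(M ; Y_s)`. -/
theorem adaptive_attack_leak_le_max {Ω μ 𝒳 : Type*} [Fintype Ω] [Fintype μ]
    [DecidableEq μ] [Fintype 𝒳] [DecidableEq 𝒳]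
    (p : Ω → ℝ) (hp : ∀ ω, 0 ≤ p ω) (hp1 : ∑ ω, p ω = 1)
    (ℓ ζ : ℕ) (M : Ω → μ) (Y : Fin ℓ → Ω → 𝒳)
    (𝔄 : Finset (Finset (Fin ℓ))) (h𝔄 : ∀ s ∈ 𝔄, s.card = ζ)
    (hcond : ∀ s ∈ 𝔄, ∀ z : (↥s → 𝒳),
      0 < ∑ ω ∈ Finset.univ.filter (fun ω => ∀ e : ↥s, Y e.1 ω = z e), p ω →
      entH (condPMF p (fun ω => ∀ e : ↥s, Y e.1 ω = z e)) M
        = condH p M (fun ω (e : ↥s) => Y e.1 ω))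
    (α : (j : Fin ζ) → (Fin (j : ℕ) → 𝒳) → Fin ℓ)
    (hcompat : ∀ z : Fin ζ → 𝒳,
      (Finset.image
        (fun j : Fin ζ => α j (fun i => z ⟨i.1, i.2.trans j.2⟩)) Finset.univ) ∈ 𝔄)
    (Z : Ω → Fin ζ → 𝒳)
    (hZ : ∀ ω (j : Fin ζ),
      Z ω j = Y (α j (fun i => Z ω ⟨i.1, i.2.trans j.2⟩)) ω) :
    ∃ s ∈ 𝔄, mutInfo p M Z ≤ mutInfo p M (fun ω (e : ↥s) => Y e.1 ω) := by
  classical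
  -- Ω is nonempty
  have hΩ : Nonempty Ω := by
    rcases isEmpty_or_nonempty Ω with h | h
    · rw [Finset.univ_eq_empty, Finset.sum_empty] at hp1; norm_num at hp1
    · exact h
  obtain ⟨ω₁⟩ := hΩ
  -- forward/backward characterization of the event {Z = z}
  have hfwd : ∀ (z : Fin ζ → 𝒳) (ω : Ω), Z ω = z →
      ∀ j : Fin ζ, Y (α j (fun i => z ⟨i.1, i.2.trans j.2⟩)) ω = z j := by
    intro z ω h j
    rw [← h]
    exact (hZ ω j).symm
  have hbwd : ∀ (z : Fin ζ → 𝒳) (ω : Ω),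
      (∀ j : Fin ζ, Y (α j (fun i => z ⟨i.1, i.2.trans j.2⟩)) ω = z j) → Z ω = z := by
    intro z ω h
    suffices h' : ∀ n (hn : n < ζ), Z ω ⟨n, hn⟩ = z ⟨n, hn⟩ by
      funext j; exact h' j.1 j.2
    intro n
    induction n using Nat.strong_induction_on with
    | _ n ih =>
      intro hn
      have hrestr : (fun i : Fin n => Z ω ⟨i.1, i.2.trans hn⟩)
          = (fun i : Fin n => z ⟨i.1, i.2.trans hn⟩) := by
        funext i; exact ih i.1 i.2 (i.2.trans hn)
      rw [hZ ω ⟨n, hn⟩]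
      rw [show (fun i : Fin ((⟨n, hn⟩ : Fin ζ) : ℕ) => Z ω ⟨i.1, i.2.trans hn⟩)
          = (fun i : Fin n => z ⟨i.1, i.2.trans hn⟩) from hrestr]
      exact h ⟨n, hn⟩
  -- pick the minimizing s*
  obtain ⟨sm, hsm, hmin⟩ := Finset.exists_min_image 𝔄
    (fun s => condH p M (fun ω (e : ↥s) => Y e.1 ω)) ⟨_, hcompat (Z ω₁)⟩
  refine ⟨sm, hsm, ?_⟩
  set c := condH p M (fun ω (e : ↥sm) => Y e.1 ω) with hc
  -- key inequality on conditional entropies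
  have hsum1 : ∑ z, pmfProb p Z z = 1 := by rw [sum_pmfProb, hp1]
  have key : c ≤ condH p M Z := by
    rw [condH_eq_sum p hp M Z]
    calc c = ∑ z, pmfProb p Z z * c := by
            rw [← Finset.sum_mul, hsum1, one_mul]
      _ ≤ ∑ z, pmfProb p Z z * entH (condPMF p (fun ω => Z ω = z)) M := by
          apply Finset.sum_le_sum
          intro z _
          rcases eq_or_lt_of_le (pmfProb_nonneg p hp Z z) with hq | hq
          · rw [← hq]; simp
          · -- positive probability case
            apply mul_le_mul_of_nonneg_left _ (le_of_lt hq)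
            -- there is ω₀ with Z ω₀ = z
            have hex : ∃ ω₀, Z ω₀ = z := by
              by_contra hcon
              push_neg at hcon
              simp only [pmfProb, hcon, if_false, Finset.sum_const_zero] at hq
              exact lt_irrefl 0 hq
            obtain ⟨ω₀, hω₀⟩ := hex
            set s : Finset (Fin ℓ) := Finset.image
              (fun j : Fin ζ => α j (fun i => z ⟨i.1, i.2.trans j.2⟩)) Finset.univ with hs
            have hsA : s ∈ 𝔄 := hcompat z
            have h0 : ∀ j : Fin ζ, Y (α j (fun i => z ⟨i.1, i.2.trans j.2⟩)) ω₀ = z j :=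
              hfwd z ω₀ hω₀
            -- event equality
            have hiff : ∀ ω, (Z ω = z) ↔ (∀ e : ↥s, Y e.1 ω = Y e.1 ω₀) := by
              intro ω
              constructor
              · intro h e
                obtain ⟨j, _, hj⟩ := Finset.mem_image.mp e.2
                rw [← hj, hfwd z ω h j, h0 j]
              · intro h
                apply hbwd z ω
                intro j
                have hmem : α j (fun i => z ⟨i.1, i.2.trans j.2⟩) ∈ s := by
                  rw [hs]; exact Finset.mem_image_of_mem _ (Finset.mem_univ j)
                rw [h ⟨_, hmem⟩, h0 j]
            have hpmf : condPMF p (fun ω => Z ω = z)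
                = condPMF p (fun ω => ∀ e : ↥s, Y e.1 ω = Y e.1 ω₀) :=
              condPMF_congr p _ _ hiff
            have hpos : 0 < ∑ ω ∈ Finset.univ.filter
                (fun ω => ∀ e : ↥s, Y e.1 ω = Y e.1 ω₀), p ω := by
              have : Finset.univ.filter (fun ω => ∀ e : ↥s, Y e.1 ω = Y e.1 ω₀)
                  = Finset.univ.filter (fun ω => Z ω = z) :=
                (Finset.filter_congr (fun ω _ => hiff ω)).symm
              rw [this, ← pmfProb_eq_sum_filter]
              exact hq
            rw [hpmf, hcond s hsA (fun e => Y e.1 ω₀) hpos]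
            exact hmin s hsA
  have hM1 := mutInfo_eq p M Z
  have hM2 := mutInfo_eq p M (fun ω (e : ↥sm) => Y e.1 ω)
  rw [hM1, hM2, ← hc]
  linarith
end

section
/- For every prime power q = p^e (p prime, e ≥ 1) and all natural numbers k > r ≥ 1, there exist a natural number n and vectors v_1,…,v_r in F^k, where F is a finite field with q^n elements (an extension of F_q), such that v_{i,j} = δ_{i,j} for all 1 ≤ i ≤ r and 1 ≤ j ≤ r, and for every injective function t from {1,…,r} to {1,…,k} the r × r matrix (v_{i, t(j)})_{1 ≤ i,j ≤ r} is invertible. -/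
open Finset

/-- paper's Lemma 4 / `L425`: for every prime power `q = p ^ e` and all
naturals `k > r ≥ 1`, there exist `n ≥ 1` and vectors `v 1, …, v r` in `F ^ k`, where
`F` is the Galois field with `q ^ n = p ^ (e * n)` elements, such that
`v i j = δ i j` on the first `r` coordinates and, for every injective
`t : Fin r → Fin k`, the `r × r` matrix `(v i (t j))` is invertible. -/
theorem exists_wiretapII_vectors (p e k r : ℕ) [hp : Fact p.Prime]
    (he : 1 ≤ e) (hr : 1 ≤ r) (hrk : r < k) :
    ∃ n : ℕ, 0 < n ∧
      ∃ v : Fin r → Fin k → GaloisField p (e * n),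
        (∀ i j : Fin r, v i (Fin.castLE hrk.le j) = if i = j then 1 else 0) ∧
        ∀ t : Fin r → Fin k, Function.Injective t →
          IsUnit (Matrix.of fun i j : Fin r => v i (t j)).det := by
  have hk0 : 0 < k := by omega
  refine ⟨k, hk0, ?_⟩
  have hek : e * k ≠ 0 := by positivity
  haveI : Fintype (GaloisField p (e * k)) := Fintype.ofFinite _
  -- cardinality bound
  have hcard : k ≤ Fintype.card (GaloisField p (e * k)) := by
    rw [← Nat.card_eq_fintype_card, GaloisField.card p (e * k) hek]
    calc k ≤ 2 ^ k := (Nat.lt_two_pow_self (n := k)).le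
    _ ≤ 2 ^ (e * k) := Nat.pow_le_pow_right (by norm_num) (Nat.le_mul_of_pos_left k he)
    _ ≤ p ^ (e * k) := Nat.pow_le_pow_left hp.out.two_le _
  obtain ⟨ι⟩ : Nonempty (Fin k ↪ GaloisField p (e * k)) :=
    Function.Embedding.nonempty_of_card_le (by simpa using hcard)
  set M : Matrix (Fin r) (Fin k) (GaloisField p (e * k)) :=
    Matrix.of fun i j => ι j ^ (i : ℕ) with hM
  set A : Matrix (Fin r) (Fin r) (GaloisField p (e * k)) :=
    M.submatrix id (Fin.castLE hrk.le) with hA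
  have hvand : ∀ s : Fin r → Fin k, Function.Injective s →
      (M.submatrix id s).det ≠ 0 := by
    intro s hs
    have : M.submatrix id s = (Matrix.vandermonde (fun j => ι (s j))).transpose := by
      ext i j
      simp [hM, Matrix.vandermonde]
    rw [this, Matrix.det_transpose]
    exact Matrix.det_vandermonde_ne_zero_iff.mpr (ι.injective.comp hs)
  have hAdet : IsUnit A.det :=
    isUnit_iff_ne_zero.mpr (hvand _ (Fin.castLE_injective hrk.le))
  refine ⟨fun i j => (A⁻¹ * M) i j, ?_, ?_⟩
  · intro i j
    show (A⁻¹ * M) i (Fin.castLE hrk.le j) = _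
    have : (A⁻¹ * M) i (Fin.castLE hrk.le j) = (A⁻¹ * A) i j := by
      simp [Matrix.mul_apply, hA]
    rw [this, Matrix.nonsing_inv_mul A hAdet, Matrix.one_apply]
  · intro t ht
    show IsUnit (Matrix.of fun i j : Fin r => (A⁻¹ * M) i (t j)).det
    have : (Matrix.of fun i j : Fin r => (A⁻¹ * M) i (t j)) = A⁻¹ * M.submatrix id t := by
      ext i j
      simp [Matrix.mul_apply]
    rw [this, Matrix.det_mul]
    exact (A.isUnit_nonsing_inv_det hAdet).mul (isUnit_iff_ne_zero.mpr (hvand t ht))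
end

section
/- Let F be a finite field, let k > r ≥ 1, and let v_1,…,v_r ∈ F^k satisfy v_{i,j} = δ_{i,j} for 1 ≤ i,j ≤ r and the property that for every injective t : {1,…,r} → {1,…,k} the r × r matrix (v_{i,t(j)})_{i,j} is invertible. For a message m ∈ F^{k−r} and randomness ℓ ∈ F^r, define the codeword Y(m,ℓ) ∈ F^k by Y_j = ℓ_j for 1 ≤ j ≤ r and Y_j = m_{j−r} + Σ_{j'=1}^{r} v_{j',j} ℓ_{j'} for r+1 ≤ j ≤ k. Then for every m ∈ F^{k−r} and every injective t : {1,…,r} → {1,…,k}, the map F^r → F^r sending ℓ to (Y_{t(1)}(m,ℓ),…,Y_{t(r)}(m,ℓ)) is a bijection; consequently, when ℓ is uniformly distributed and independent of the message, any r eavesdropped coordinates of the codeword are uniformly distributed and carry no information about m. -/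
open Finset

/-- The wiretap channel II codeword: `Y j = l j` for `j < r` and
`Y j = m (j - r) + ∑ i, v i j * l i` for `r ≤ j < k` (0-indexed). -/
noncomputable def codeword {F : Type*} [Field F] {k r : ℕ} (v : Fin r → Fin k → F)
    (m : Fin (k - r) → F) (l : Fin r → F) (j : Fin k) : F :=
  if h : (j : ℕ) < r then l ⟨j, h⟩
  else m ⟨(j : ℕ) - r, by have := j.isLt; omega⟩ + ∑ i, v i j * l i


/-- Entropy of a uniformly-distributed finite random variable. -/
lemma entH_aux {Ω : Type*} [Fintype Ω] {α : Type*} [Fintype α] [DecidableEq α]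
    [Nonempty α] (p : Ω → ℝ) (X : Ω → α)
    (h : ∀ x, pmfProb p X x = (Fintype.card α : ℝ)⁻¹) :
    entH p X = Real.log (Fintype.card α) := by
  have hN : (0:ℝ) < Fintype.card α := by exact_mod_cast Fintype.card_pos
  rw [entH]
  simp only [h]
  rw [Finset.sum_const, card_univ, nsmul_eq_mul, Real.negMulLog, Real.log_inv]
  field_simp

/-- secrecy of the wiretap channel II code. For every message `m` and
every injective choice `t` of `r` eavesdropped coordinates, the map sending the
randomness `l` to the eavesdropped coordinates of the codeword is a bijection;
consequently, when the randomness is uniform and independent of the (uniform) message,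
any `r` eavesdropped coordinates are uniformly distributed and carry no information
about the message (`I(M ; Z_t) = 0`). -/
theorem wiretapII_secrecy {F : Type*} [Field F] [Fintype F] [DecidableEq F]
    (k r : ℕ) (hr : 1 ≤ r) (hrk : r < k)
    (v : Fin r → Fin k → F)
    (hv : ∀ i j : Fin r, v i (Fin.castLE hrk.le j) = if i = j then 1 else 0)
    (hinv : ∀ t : Fin r → Fin k, Function.Injective t →
      IsUnit (Matrix.of fun i j : Fin r => v i (t j)).det) :
    (∀ (m : Fin (k - r) → F) (t : Fin r → Fin k), Function.Injective t →
      Function.Bijective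
        (fun l : Fin r → F => fun i : Fin r => codeword v m l (t i)))
    ∧ (∀ t : Fin r → Fin k, Function.Injective t →
        (∀ z : Fin r → F,
          pmfProb
            (fun _ : (Fin (k - r) → F) × (Fin r → F) =>
              (Fintype.card ((Fin (k - r) → F) × (Fin r → F)) : ℝ)⁻¹)
            (fun ω (i : Fin r) => codeword v ω.1 ω.2 (t i)) z
          = ((Fintype.card F : ℝ) ^ r)⁻¹)
        ∧ mutInfo
            (fun _ : (Fin (k - r) → F) × (Fin r → F) =>
              (Fintype.card ((Fin (k - r) → F) × (Fin r → F)) : ℝ)⁻¹)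
            Prod.fst (fun ω (i : Fin r) => codeword v ω.1 ω.2 (t i)) = 0) := by
  classical
  have hexp : ∀ (m : Fin (k-r) → F) (l : Fin r → F) (j : Fin k),
      codeword v m l j =
        (if h : (j:ℕ) < r then 0 else m ⟨(j:ℕ) - r, by have := j.isLt; omega⟩)
        + ∑ i, v i j * l i := by
    intro m l j
    by_cases h : (j:ℕ) < r
    · have hv' : ∀ i, v i j = if i = ⟨(j:ℕ), h⟩ then 1 else 0 := fun i => hv i ⟨(j:ℕ), h⟩
      have hsum : ∑ i, v i j * l i = l ⟨(j:ℕ), h⟩ := by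
        simp [hv', ite_mul]
      simp [codeword, h, hsum]
    · simp [codeword, h]
  have hbij : ∀ (m : Fin (k - r) → F) (t : Fin r → Fin k), Function.Injective t →
      Function.Bijective
        (fun l : Fin r → F => fun i : Fin r => codeword v m l (t i)) := by
    intro m t ht
    have hinj : Function.Injective
        (fun l : Fin r → F => fun i : Fin r => codeword v m l (t i)) := by
      intro l l' hll
      set M : Matrix (Fin r) (Fin r) F := Matrix.of (fun i j => v j (t i)) with hMdef
      have hMdet : IsUnit M.det := by
        have h1 : M = (Matrix.of fun i j : Fin r => v i (t j)).transpose := rfl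
        rw [h1, Matrix.det_transpose]; exact hinv t ht
      have hmv : M.mulVec l = M.mulVec l' := by
        funext i
        have h2 := congrFun hll i
        simp only [hexp] at h2
        have h3 := add_left_cancel h2
        simpa [Matrix.mulVec, dotProduct, hMdef] using h3
      have h4 := congrArg (fun w => M⁻¹.mulVec w) hmv
      simpa [Matrix.mulVec_mulVec, Matrix.nonsing_inv_mul M hMdet] using h4
    exact (Finite.injective_iff_bijective).mp hinj
  refine ⟨hbij, ?_⟩
  intro t ht
  set u : ℝ := (Fintype.card ((Fin (k - r) → F) × (Fin r → F)) : ℝ)⁻¹ with hu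
  have hcardB : (Fintype.card (Fin r → F) : ℝ) = (Fintype.card F : ℝ) ^ r := by
    rw [Fintype.card_fun]; push_cast; simp
  have hcardΩ : (Fintype.card ((Fin (k - r) → F) × (Fin r → F)) : ℝ)
      = (Fintype.card (Fin (k-r) → F) : ℝ) * (Fintype.card (Fin r → F) : ℝ) := by
    rw [Fintype.card_prod]; push_cast; ring
  have hApos : (0:ℝ) < (Fintype.card (Fin (k-r) → F) : ℝ) := by
    exact_mod_cast Fintype.card_pos
  have hBpos : (0:ℝ) < (Fintype.card (Fin r → F) : ℝ) := by
    exact_mod_cast Fintype.card_pos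
  have hsum_one : ∀ (c : ℝ) (m : Fin (k-r) → F) (z : Fin r → F),
      (∑ l : Fin r → F, if (fun i => codeword v m l (t i)) = z then c else 0) = c := by
    intro c m z
    rw [Fintype.sum_bijective _ (hbij m t ht)
      (fun l => if (fun i => codeword v m l (t i)) = z then c else 0)
      (fun y => if y = z then c else 0) (fun l => rfl)]
    simp
  have hZ : ∀ z : Fin r → F,
      pmfProb (fun _ : (Fin (k - r) → F) × (Fin r → F) => u)
        (fun ω (i : Fin r) => codeword v ω.1 ω.2 (t i)) z
      = ((Fintype.card (Fin r → F) : ℝ))⁻¹ := by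
    intro z
    rw [pmfProb, Fintype.sum_prod_type]
    simp only [hsum_one u]
    rw [Finset.sum_const, card_univ, nsmul_eq_mul, hu, hcardΩ, mul_inv]
    field_simp
  have hM : ∀ m0 : Fin (k-r) → F,
      pmfProb (fun _ : (Fin (k - r) → F) × (Fin r → F) => u)
        Prod.fst m0 = ((Fintype.card (Fin (k-r) → F) : ℝ))⁻¹ := by
    intro m0
    rw [pmfProb, Fintype.sum_prod_type]
    have h1 : ∀ m : Fin (k-r) → F,
        (∑ _l : Fin r → F, if m = m0 then u else 0)
        = if m = m0 then (Fintype.card (Fin r → F) : ℝ) * u else 0 := by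
      intro m; by_cases hm : m = m0 <;>
        simp [hm, Finset.sum_const, card_univ, nsmul_eq_mul]
    simp only [h1]
    rw [Finset.sum_ite_eq' univ m0 (fun _ => (Fintype.card (Fin r → F) : ℝ) * u)]
    simp only [mem_univ, if_true, hu, hcardΩ, mul_inv]
    field_simp
  have hJ : ∀ mz : (Fin (k-r) → F) × (Fin r → F),
      pmfProb (fun _ : (Fin (k - r) → F) × (Fin r → F) => u)
        (fun ω => (ω.1, fun i : Fin r => codeword v ω.1 ω.2 (t i))) mz
      = ((Fintype.card ((Fin (k-r) → F) × (Fin r → F)) : ℝ))⁻¹ := by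
    intro ⟨m0, z⟩
    rw [pmfProb, Fintype.sum_prod_type]
    have h1 : ∀ m : Fin (k-r) → F,
        (∑ l : Fin r → F,
          if (m, fun i : Fin r => codeword v m l (t i)) = (m0, z) then u else 0)
        = if m = m0 then u else 0 := by
      intro m
      by_cases hm : m = m0
      · subst hm
        simp only [Prod.mk.injEq, true_and, if_pos rfl]
        exact hsum_one u m z
      · simp [Prod.mk.injEq, hm]
    simp only [h1]
    simp [hu]
  refine ⟨fun z => by rw [hZ z, hcardB], ?_⟩
  rw [mutInfo, entH_aux _ Prod.fst hM, entH_aux _ _ hZ, entH_aux _ _ hJ]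
  rw [hcardΩ, Real.log_mul (ne_of_gt hApos) (ne_of_gt hBpos)]
  ring
end
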